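/- Let A be a torsion-free abelian group of rank 1 (a subgroup of ℚ), t an automorphism of A, and C ≤ A an infinite cyclic subgroup with generator c such that t(c) = m·c for an integer m ≠ 0 and A = ⋃_{k≥0} t⁻ᵏ(C). Then A is isomorphic to ℤ[1/m]. -/

import Mathlib

/-- The additive subgroup `ℤ[1/m]` of `ℚ`, generated by the powers `m⁻ᵏ`. -/
def zOneOver (m : ℤ) : AddSubgroup ℚ :=
  AddSubgroup.closure {x : ℚ | ∃ k : ℕ, x = ((m : ℚ) ^ k)⁻¹}

lemma den_mul_self (q : ℚ) : (q.den : ℚ) * q = q.num := by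
  rw [mul_comm]
  rw_mod_cast [Rat.mul_den_eq_num]

/-- If `A ≤ ℚ` is nontrivial, `t` an automorphism of `A`, `c ≠ 0` with `t c = m • c` and
`A = ⋃ₖ t⁻ᵏ⟨c⟩`, then `A ≅ ℤ[1/m]`. -/
theorem stmt_15 (A : AddSubgroup ℚ) (hA : A ≠ ⊥) (t : A ≃+ A) (c : A) (hc : c ≠ 0)
    (m : ℤ) (hm : m ≠ 0) (htc : t c = m • c)
    (hunion : ∀ x : A, ∃ k : ℕ, (k • (show AddAut A from t)) x ∈ AddSubgroup.zmultiples c) :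
    Nonempty (A ≃+ zOneOver m) := by
  have hcQ : (c : ℚ) ≠ 0 := fun h => hc (Subtype.ext h)
  have hmQ : (m : ℚ) ≠ 0 := Int.cast_ne_zero.mpr hm
  -- Every automorphism of a rank-one group is multiplication by a rational; here it's m.
  have hmul : ∀ x : A, ((t x : A) : ℚ) = m * x := by
    intro x
    by_cases hx : (x : ℚ) = 0
    · have hx0 : x = 0 := Subtype.ext hx
      simp [hx0, hx]
    · set a : ℤ := (x : ℚ).num * ((c : ℚ)).den with ha
      set b : ℤ := (c : ℚ).num * ((x : ℚ)).den with hb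
      have hbQ : (b : ℚ) ≠ 0 := by
        simp only [hb, Int.cast_mul, Int.cast_natCast, mul_ne_zero_iff]
        exact ⟨Int.cast_ne_zero.mpr (Rat.num_ne_zero.mpr hcQ),
          Nat.cast_ne_zero.mpr (x : ℚ).den_nz⟩
      have hab : (a : ℚ) * (c : ℚ) = (b : ℚ) * (x : ℚ) := by
        push_cast [ha, hb]
        rw [mul_assoc, mul_assoc, den_mul_self, den_mul_self, mul_comm]
      have hab' : a • c = b • x := by
        apply Subtype.ext
        push_cast
        simp only [zsmul_eq_mul]
        exact hab
      have h1 : t (a • c) = t (b • x) := by rw [hab']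
      rw [map_zsmul, map_zsmul, htc, smul_smul] at h1
      have h2 : ((a * m) • c : A) = (b • t x : A) := h1
      have h3 : ((a : ℚ) * m) * c = (b : ℚ) * (t x : ℚ) := by
        have h := congrArg (Subtype.val) h2
        push_cast [zsmul_eq_mul] at h
        exact h
      apply mul_left_cancel₀ hbQ
      rw [← h3]
      rw [mul_comm ((a:ℚ)) (m:ℚ), mul_assoc, hab]
      ring
  -- iterate
  have hpow : ∀ (k : ℕ) (x : A), (((k • (show AddAut A from t)) x : A) : ℚ) = (m : ℚ) ^ k * x := by
    intro k
    induction k with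
    | zero => intro x; simp
    | succ n ih =>
      intro x
      have : ((n + 1) • (show AddAut A from t)) x = (n • (show AddAut A from t)) (t x) := by
        rw [succ_nsmul]
        rfl
      rw [this, ih, hmul, pow_succ]
      ring
  -- inverse
  have hsymm : ∀ x : A, ((t.symm x : A) : ℚ) = (x : ℚ) / m := by
    intro x
    have := hmul (t.symm x)
    rw [t.apply_symm_apply] at this
    field_simp [this]
    rw [this]; ring
  have hsymmpow : ∀ k : ℕ, (((k • (show AddAut A from t.symm)) c : A) : ℚ) = (c : ℚ) * ((m : ℚ) ^ k)⁻¹ := by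
    intro k
    induction k with
    | zero => simp
    | succ n ih =>
      have : ((n + 1) • (show AddAut A from t.symm)) c = t.symm ((n • (show AddAut A from t.symm)) c) := by
        rw [succ_nsmul']
        rfl
      rw [this, hsymm, ih, pow_succ, div_eq_mul_inv, mul_inv]
      ring
  -- the map x ↦ x / c
  set g : ℚ →+ ℚ := AddMonoidHom.mulRight ((c : ℚ))⁻¹ with hg
  have hginj : Function.Injective g := by
    intro u v huv
    have : u * (c : ℚ)⁻¹ = v * (c : ℚ)⁻¹ := huv
    exact mul_right_cancel₀ (inv_ne_zero hcQ) this
  have hmap : A.map g = zOneOver m := by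
    apply le_antisymm
    · rintro y ⟨x, hxA, rfl⟩
      obtain ⟨k, n, hn⟩ := hunion ⟨x, hxA⟩
      have hval : (n : ℚ) * c = (m : ℚ) ^ k * x := by
        have h := congrArg Subtype.val hn
        push_cast [zsmul_eq_mul] at h
        rw [hpow] at h
        exact h
      have : g x = n • ((m : ℚ) ^ k)⁻¹ := by
        show x * (c : ℚ)⁻¹ = n • ((m : ℚ) ^ k)⁻¹
        have hx : x = (n : ℚ) * c / (m : ℚ) ^ k := by
          field_simp
          linarith [hval]
        rw [hx]
        field_simp
        rw [zsmul_eq_mul, one_div, mul_left_comm, mul_inv_cancel₀ (pow_ne_zero k hmQ), mul_one]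
      rw [this]
      have hgen : ((m : ℚ) ^ k)⁻¹ ∈ zOneOver m :=
        AddSubgroup.subset_closure ⟨k, rfl⟩
      exact zsmul_mem hgen n
    · rw [zOneOver, AddSubgroup.closure_le]
      rintro y ⟨k, rfl⟩
      show ((m : ℚ) ^ k)⁻¹ ∈ A.map g
      rw [AddSubgroup.mem_map]
      refine ⟨((k • (show AddAut A from t.symm)) c : A), SetLike.coe_mem _, ?_⟩
      show (((k • (show AddAut A from t.symm)) c : A) : ℚ) * (c : ℚ)⁻¹ = ((m : ℚ) ^ k)⁻¹
      rw [hsymmpow, mul_comm (c : ℚ) _, mul_assoc, mul_inv_cancel₀ hcQ, mul_one]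
  exact ⟨(A.equivMapOfInjective g hginj).trans (AddEquiv.addSubgroupCongr hmap)⟩
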